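/- Identification of the full-data law from propensities: for discrete (X, Y, R) with positivity, the joint law satisfies f(y, r | x) = f(y, R = 1 | x) · p(r | x, y) / p(R = 1 | x, y); hence if p(r | x, y) is identified for all patterns r, then the full joint distribution f(y, r | x) is identified from the complete-case distribution f(y, R = 1 | x). -/

import Mathlib

open Finset
open scoped Classical

noncomputable def pr {Ω : Type*} [Fintype Ω] (μ : Ω → ℝ) (A : Ω → Prop) : ℝ :=
  ∑ ω, if A ω then μ ω else 0

noncomputable def cpr {Ω : Type*} [Fintype Ω] (μ : Ω → ℝ) (A B : Ω → Prop) : ℝ :=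
  pr μ (fun ω => A ω ∧ B ω) / pr μ B

/-- The propensity `p(R = r | X = x, Y = y)`. -/
noncomputable def patProp {Ω 𝒳 𝒴 : Type*} [Fintype Ω] {p : ℕ} (μ : Ω → ℝ)
    (X : Ω → 𝒳) (Y : Ω → Fin p → 𝒴) (R : Ω → Fin p → Bool)
    (r : Fin p → Bool) (x : 𝒳) (y : Fin p → 𝒴) : ℝ :=
  cpr μ (fun ω => ∀ j, R ω j = r j) (fun ω => X ω = x ∧ ∀ j, Y ω j = y j)


lemma pr_congr {Ω : Type*} [Fintype Ω] (μ : Ω → ℝ) {A B : Ω → Prop}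
    (h : ∀ ω, A ω ↔ B ω) : pr μ A = pr μ B := by
  unfold pr
  exact Finset.sum_congr rfl fun ω _ => by rw [if_congr (h ω) rfl rfl]

lemma aux19 {Ω 𝒳 𝒴 : Type*} [Fintype Ω] {p : ℕ} (μ : Ω → ℝ)
    (X : Ω → 𝒳) (Y : Ω → Fin p → 𝒴) (R : Ω → Fin p → Bool)
    (x : 𝒳) (y : Fin p → 𝒴) (r : Fin p → Bool)
    (hc : pr μ (fun ω => X ω = x ∧ ∀ j, Y ω j = y j) > 0)
    (hr : patProp μ X Y R r x y > 0)
    (h1 : patProp μ X Y R (fun _ => true) x y > 0) :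
    cpr μ (fun ω => (∀ j, Y ω j = y j) ∧ ∀ j, R ω j = r j) (fun ω => X ω = x)
      = cpr μ (fun ω => (∀ j, Y ω j = y j) ∧ ∀ j, R ω j = true) (fun ω => X ω = x)
        * patProp μ X Y R r x y / patProp μ X Y R (fun _ => true) x y := by
  unfold patProp cpr at *
  set c := pr μ (fun ω => X ω = x ∧ ∀ j, Y ω j = y j) with hcdef
  set a := pr μ (fun ω => (∀ j, R ω j = r j) ∧ (X ω = x ∧ ∀ j, Y ω j = y j)) with hadef
  set b := pr μ (fun ω => (∀ j, R ω j = true) ∧ (X ω = x ∧ ∀ j, Y ω j = y j)) with hbdef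
  set d := pr μ (fun ω => X ω = x) with hddef
  have hA : pr μ (fun ω => ((∀ j, Y ω j = y j) ∧ ∀ j, R ω j = r j) ∧ X ω = x) = a := by
    apply pr_congr; intro ω; tauto
  have hB : pr μ (fun ω => ((∀ j, Y ω j = y j) ∧ ∀ j, R ω j = true) ∧ X ω = x) = b := by
    apply pr_congr; intro ω; tauto
  rw [hA, hB]
  have hb : b > 0 := by
    have := mul_pos h1 hc
    rwa [div_mul_cancel₀ _ (ne_of_gt hc)] at this
  field_simp

/-- the identity
`f(y, r | x) = f(y, R = 1 | x) · p(r | x, y) / p(R = 1 | x, y)`; hence if two laws with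
positivity share the complete-case distribution and all pattern propensities, they
share the whole joint law `f(y, r | x)`. -/
theorem stmt19 {Ω Ω' 𝒳 𝒴 : Type*} [Fintype Ω] [Fintype Ω'] {p : ℕ}
    (μ : Ω → ℝ) (hμ0 : ∀ ω, 0 ≤ μ ω) (hμ1 : ∑ ω, μ ω = 1)
    (X : Ω → 𝒳) (Y : Ω → Fin p → 𝒴) (R : Ω → Fin p → Bool)
    (μ' : Ω' → ℝ) (hμ'0 : ∀ ω, 0 ≤ μ' ω) (hμ'1 : ∑ ω, μ' ω = 1)
    (X' : Ω' → 𝒳) (Y' : Ω' → Fin p → 𝒴) (R' : Ω' → Fin p → Bool)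
    (hpos : ∀ (r' : Fin p → Bool) (x : 𝒳) (y : Fin p → 𝒴),
      pr μ (fun ω => X ω = x ∧ ∀ j, Y ω j = y j) > 0 → patProp μ X Y R r' x y > 0)
    (hpos' : ∀ (r' : Fin p → Bool) (x : 𝒳) (y : Fin p → 𝒴),
      pr μ' (fun ω => X' ω = x ∧ ∀ j, Y' ω j = y j) > 0 →
      patProp μ' X' Y' R' r' x y > 0)
    (x : 𝒳) (hx : pr μ (fun ω => X ω = x) > 0)
    (hx' : pr μ' (fun ω => X' ω = x) > 0) :
    (∀ (y : Fin p → 𝒴) (r : Fin p → Bool),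
      pr μ (fun ω => X ω = x ∧ ∀ j, Y ω j = y j) > 0 →
      cpr μ (fun ω => (∀ j, Y ω j = y j) ∧ ∀ j, R ω j = r j) (fun ω => X ω = x)
        = cpr μ (fun ω => (∀ j, Y ω j = y j) ∧ ∀ j, R ω j = true) (fun ω => X ω = x)
          * patProp μ X Y R r x y / patProp μ X Y R (fun _ => true) x y) ∧
    ((∀ y : Fin p → 𝒴,
        (pr μ (fun ω => X ω = x ∧ ∀ j, Y ω j = y j) > 0 ↔
          pr μ' (fun ω => X' ω = x ∧ ∀ j, Y' ω j = y j) > 0)) →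
      (∀ y : Fin p → 𝒴,
        cpr μ (fun ω => (∀ j, Y ω j = y j) ∧ ∀ j, R ω j = true) (fun ω => X ω = x)
          = cpr μ' (fun ω => (∀ j, Y' ω j = y j) ∧ ∀ j, R' ω j = true)
              (fun ω => X' ω = x)) →
      (∀ (y : Fin p → 𝒴) (r : Fin p → Bool),
        pr μ (fun ω => X ω = x ∧ ∀ j, Y ω j = y j) > 0 →
        patProp μ X Y R r x y = patProp μ' X' Y' R' r x y) →
      ∀ (y : Fin p → 𝒴) (r : Fin p → Bool),
        pr μ (fun ω => X ω = x ∧ ∀ j, Y ω j = y j) > 0 →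
        cpr μ (fun ω => (∀ j, Y ω j = y j) ∧ ∀ j, R ω j = r j) (fun ω => X ω = x)
          = cpr μ' (fun ω => (∀ j, Y' ω j = y j) ∧ ∀ j, R' ω j = r j)
              (fun ω => X' ω = x)) := by
  constructor
  · intro y r hc
    exact aux19 μ X Y R x y r hc (hpos r x y hc) (hpos (fun _ => true) x y hc)
  · intro hiff hcc hprop y r hc
    have hc' : pr μ' (fun ω => X' ω = x ∧ ∀ j, Y' ω j = y j) > 0 := (hiff y).mp hc
    rw [aux19 μ X Y R x y r hc (hpos r x y hc) (hpos (fun _ => true) x y hc),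
      aux19 μ' X' Y' R' x y r hc' (hpos' r x y hc') (hpos' (fun _ => true) x y hc'),
      hcc y, hprop y r hc, hprop y (fun _ => true) hc]
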